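/- Suppose π is a d^p probability tensor generated by a weakly hierarchical log-linear model θ such that |C_θ^{(j)}| < m − 1 for all j ∈ V, where m ≥ 2. Then rnk⁺_P(π) < m^{p−1}. -/

import Mathlib

/-- A nonnegative PARAFAC decomposition with `m` terms. -/
def IsParafacDecomp {p : ℕ} {d : Fin p → ℕ}
    (M : ((j : Fin p) → Fin (d j)) → ℝ) (m : ℕ) : Prop :=
  ∃ lam : Fin m → (j : Fin p) → Fin (d j) → ℝ,
    (∀ h j c, 0 ≤ lam h j c) ∧
    ∀ i : (j : Fin p) → Fin (d j), M i = ∑ h : Fin m, ∏ j : Fin p, lam h j (i j)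

/-- The nonnegative PARAFAC rank. -/
noncomputable def parafacRank {p : ℕ} {d : Fin p → ℕ}
    (M : ((j : Fin p) → Fin (d j)) → ℝ) : ℕ :=
  sInf {m | IsParafacDecomp M m}

/-- The probability tensor of the log-linear model `θ`:
`π i = exp (∑_{E ⊆ V} θ_E(i_E))`, normalized so that the entries sum to one. -/
noncomputable def loglinTensor {p : ℕ} {d : Fin p → ℕ}
    (θ : Finset (Fin p) → ((j : Fin p) → Fin (d j)) → ℝ) :
    ((j : Fin p) → Fin (d j)) → ℝ :=
  fun i => Real.exp (∑ E : Finset (Fin p), θ E i) /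
    ∑ i' : (j : Fin p) → Fin (d j), Real.exp (∑ E : Finset (Fin p), θ E i')

/-- `C_θ^{(j)}`: the set of levels of variable `j` sharing a nonzero two-way interaction
with some other variable. -/
def interactingLevels {p d : ℕ} (θ : Finset (Fin p) → (Fin p → Fin d) → ℝ)
    (j : Fin p) : Set (Fin d) :=
  {c | ∃ j' : Fin p, j' ≠ j ∧ ∃ x : Fin p → Fin d, x j = c ∧ θ {j, j'} x ≠ 0}

lemma isParafacDecomp_of_fintype {p : ℕ} {d : Fin p → ℕ}
    {M : ((j : Fin p) → Fin (d j)) → ℝ} {m : ℕ}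
    (T : Type) [Fintype T] (hT : Fintype.card T = m)
    (lam : T → (j : Fin p) → Fin (d j) → ℝ)
    (hnn : ∀ t j c, 0 ≤ lam t j c)
    (hsum : ∀ i, M i = ∑ t : T, ∏ j : Fin p, lam t j (i j)) :
    IsParafacDecomp M m := by
  obtain e := Fintype.equivFinOfCardEq hT
  refine ⟨fun h => lam (e.symm h), fun h j c => hnn _ _ _, fun i => ?_⟩
  rw [hsum i]
  exact (Fintype.sum_equiv e.symm _ _ fun h => rfl).symm


noncomputable def gsum {p d : ℕ} (θ : Finset (Fin p) → (Fin p → Fin d) → ℝ)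
    (i : Fin p → Fin d) : ℝ :=
  ∑ E ∈ Finset.univ.filter (fun E : Finset (Fin p) => 2 ≤ E.card), θ E i

lemma sum_split {p d : ℕ} (θ : Finset (Fin p) → (Fin p → Fin d) → ℝ) (i : Fin p → Fin d) :
    ∑ E : Finset (Fin p), θ E i
      = θ ∅ i + (∑ j : Fin p, θ {j} i) + gsum θ i := by
  classical
  rw [← Finset.sum_filter_add_sum_filter_not Finset.univ
    (fun E : Finset (Fin p) => 2 ≤ E.card) (fun E => θ E i)]
  rw [add_comm, gsum]
  congr 1
  have hset : Finset.univ.filter (fun E : Finset (Fin p) => ¬ 2 ≤ E.card)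
      = insert ∅ (Finset.univ.image fun j : Fin p => ({j} : Finset (Fin p))) := by
    ext E
    simp only [Finset.mem_filter, Finset.mem_univ, true_and, Finset.mem_insert,
      Finset.mem_image, not_le]
    constructor
    · intro h
      have h01 : E.card = 0 ∨ E.card = 1 := by omega
      rcases h01 with h0 | h1
      · exact Or.inl (Finset.card_eq_zero.1 h0)
      · obtain ⟨j, rfl⟩ := Finset.card_eq_one.1 h1
        exact Or.inr ⟨j, rfl⟩
    · rintro (rfl | ⟨j, -, rfl⟩) <;> simp
  rw [hset, Finset.sum_insert (by
    simp only [Finset.mem_image]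
    rintro ⟨j, -, hj⟩
    exact (Finset.singleton_ne_empty j) hj)]
  congr 1
  rw [Finset.sum_image (fun j _ j' _ h => Finset.singleton_injective h)]

lemma theta_vanish {p d : ℕ} (θ : Finset (Fin p) → (Fin p → Fin d) → ℝ)
    (hwh : ∀ (E F : Finset (Fin p)) (i i' : Fin p → Fin d),
      E ⊆ F → θ E i = 0 → (∀ j ∈ E, i' j = i j) → θ F i' = 0)
    {E : Finset (Fin p)} (hE : 2 ≤ E.card) {j : Fin p} (hj : j ∈ E)
    {i : Fin p → Fin d} (hi : i j ∉ interactingLevels θ j) : θ E i = 0 := by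
  obtain ⟨j', hj'E, hj'ne⟩ := Finset.exists_mem_ne (by omega : 1 < E.card) j
  have h0 : θ {j, j'} i = 0 := by
    by_contra hne
    exact hi ⟨j', hj'ne, i, rfl, hne⟩
  exact hwh {j, j'} E i i
    (Finset.insert_subset hj (Finset.singleton_subset_iff.2 hj'E)) h0 (fun _ _ => rfl)

lemma main_decomp {q n e : ℕ}
    (θ : Finset (Fin (q+2)) → (Fin (q+2) → Fin (e+1)) → ℝ)
    (hdep : ∀ (E : Finset (Fin (q+2))) (i i' : Fin (q+2) → Fin (e+1)),
      (∀ j ∈ E, i j = i' j) → θ E i = θ E i')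
    (hwh : ∀ (E F : Finset (Fin (q+2))) (i i' : Fin (q+2) → Fin (e+1)),
      E ⊆ F → θ E i = 0 → (∀ j ∈ E, i' j = i j) → θ F i' = 0)
    (hC : ∀ j, (interactingLevels θ j).ncard ≤ n) :
    IsParafacDecomp (d := fun _ : Fin (q+2) => e+1)
      (loglinTensor (d := fun _ : Fin (q+2) => e+1) θ) ((n+1)^(q+1)) := by
  classical
  -- the level-collapsing maps
  have hphi : ∀ j : Fin (q+2), ∃ φ : Fin (e+1) → Fin (n+1),
      ∀ c c' : Fin (e+1), φ c = φ c' →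
        (c ∈ interactingLevels θ j → c' ∈ interactingLevels θ j ∧ c = c') := by
    intro j
    have hfin : (interactingLevels θ j).Finite := Set.toFinite _
    have hcard : Fintype.card hfin.toFinset ≤ Fintype.card (Fin n) := by
      rw [Fintype.card_coe, Fintype.card_fin, ← Set.ncard_eq_toFinset_card]
      exact hC j
    obtain ⟨f⟩ := Function.Embedding.nonempty_of_card_le hcard
    refine ⟨fun c => if h : c ∈ hfin.toFinset then (f ⟨c, h⟩).castSucc else Fin.last n, ?_⟩
    intro c c' heq hc
    simp only [] at heq
    have hc1 : c ∈ hfin.toFinset := hfin.mem_toFinset.2 hc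
    rw [dif_pos hc1] at heq
    by_cases hc2 : c' ∈ hfin.toFinset
    · rw [dif_pos hc2] at heq
      have := f.injective (Fin.castSucc_injective _ heq)
      exact ⟨hfin.mem_toFinset.1 hc2, by simpa using congrArg Subtype.val this⟩
    · rw [dif_neg hc2] at heq
      exact absurd heq (Fin.castSucc_lt_last _).ne
  choose φ hφ using hphi
  -- invariance of gsum under collapsing
  have ginv : ∀ i i' : Fin (q+2) → Fin (e+1),
      (∀ j, φ j (i j) = φ j (i' j)) → gsum θ i = gsum θ i' := by
    intro i i' h
    refine Finset.sum_congr rfl fun E hE => ?_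
    rw [Finset.mem_filter] at hE
    by_cases hall : ∀ j ∈ E, i j ∈ interactingLevels θ j
    · refine hdep E i i' fun j hj => (hφ j _ _ (h j) (hall j hj)).2
    · push_neg at hall
      obtain ⟨j, hjE, hjC⟩ := hall
      have hjC' : i' j ∉ interactingLevels θ j := fun hmem =>
        hjC (hφ j _ _ (h j).symm hmem).1
      rw [theta_vanish θ hwh hE.2 hjE hjC, theta_vanish θ hwh hE.2 hjE hjC']
  -- the G function
  have hG : ∃ G : (Fin (q+2) → Fin (n+1)) → ℝ, (∀ s, 0 ≤ G s) ∧
      ∀ i : Fin (q+2) → Fin (e+1), G (fun j => φ j (i j)) = Real.exp (gsum θ i) := by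
    refine ⟨fun s => if h : ∃ i : Fin (q+2) → Fin (e+1), (fun j => φ j (i j)) = s then
      Real.exp (gsum θ h.choose) else 0, fun s => ?_, fun i => ?_⟩
    · dsimp only
      split
      · exact (Real.exp_pos _).le
      · exact le_refl 0
    · dsimp only
      have h : ∃ i' : Fin (q+2) → Fin (e+1),
          (fun j => φ j (i' j)) = fun j => φ j (i j) := ⟨i, rfl⟩
      rw [dif_pos h]
      exact congrArg Real.exp (ginv _ _ fun j => congrFun h.choose_spec j)
  obtain ⟨G, hGnn, hGval⟩ := hG
  -- normalization constant positivity
  have hZ : 0 < ∑ i' : Fin (q+2) → Fin (e+1), Real.exp (∑ E : Finset (Fin (q+2)), θ E i') :=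
    Finset.sum_pos (fun _ _ => Real.exp_pos _) ⟨fun _ => 0, Finset.mem_univ _⟩
  -- the decomposition
  refine isParafacDecomp_of_fintype (Fin (q+1) → Fin (n+1))
    (by simp [Fintype.card_fun]) (fun t =>
      Fin.cases (motive := fun _ : Fin (q+2) => Fin (e+1) → ℝ)
        (fun c =>
          (Real.exp (θ ∅ (fun _ => c)) * Real.exp (θ {0} (fun _ => c)) /
            ∑ i' : Fin (q+2) → Fin (e+1), Real.exp (∑ E : Finset (Fin (q+2)), θ E i'))
            * G (Fin.cases (φ 0 c) t))
        (fun k c => Real.exp (θ {k.succ} (fun _ => c)) *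
          (if φ k.succ c = t k then 1 else 0)))
    ?_ ?_
  · intro t j c
    induction j using Fin.cases with
    | zero =>
      simp only [Fin.cases_zero]
      exact mul_nonneg (div_nonneg (mul_nonneg (Real.exp_pos _).le (Real.exp_pos _).le)
        hZ.le) (hGnn _)
    | succ k =>
      simp only [Fin.cases_succ]
      refine mul_nonneg (Real.exp_pos _).le ?_
      split <;> norm_num
  · intro i
    rw [Finset.sum_congr rfl (fun t _ => Fin.prod_univ_succ
      (fun j : Fin (q+2) => Fin.cases (motive := fun _ : Fin (q+2) => Fin (e+1) → ℝ)
        (fun c =>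
          (Real.exp (θ ∅ (fun _ => c)) * Real.exp (θ {0} (fun _ => c)) /
            ∑ i' : Fin (q+2) → Fin (e+1), Real.exp (∑ E : Finset (Fin (q+2)), θ E i'))
            * G (Fin.cases (φ 0 c) t))
        (fun k c => Real.exp (θ {k.succ} (fun _ => c)) *
          (if φ k.succ c = t k then 1 else 0)) j (i j)))]
    simp only [Fin.cases_zero, Fin.cases_succ]
    rw [Finset.sum_eq_single_of_mem (fun k : Fin (q+1) => φ k.succ (i k.succ))
      (Finset.mem_univ _) ?_]
    · have hcase : (Fin.cases (φ 0 (i 0)) (fun k : Fin (q+1) => φ k.succ (i k.succ)) :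
          Fin (q+2) → Fin (n+1)) = fun j => φ j (i j) := by
        funext j
        induction j using Fin.cases <;> simp
      rw [hcase, hGval i]
      simp only [eq_self_iff_true, if_true, mul_one]
      have hB : ∀ j : Fin (q+2), θ {j} (fun _ => i j) = θ {j} i := fun j =>
        hdep {j} _ _ (fun j' hj' => by
          rw [Finset.mem_singleton] at hj'; subst hj'; rfl)
      have hE0 : θ ∅ (fun _ => i 0) = θ ∅ i := hdep ∅ _ _ (by simp)
      simp only [hB, hE0]
      simp only [loglinTensor]
      rw [sum_split θ i, Real.exp_add, Real.exp_add, Real.exp_sum, Fin.prod_univ_succ]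
      ring
    · intro t _ hne
      obtain ⟨k, hk⟩ := Function.ne_iff.1 hne
      rw [Finset.prod_eq_zero (Finset.mem_univ k)
        (by rw [if_neg (Ne.symm hk), mul_zero]), mul_zero]

/-- Corollary 1: if `π` is the `d^p` probability tensor (with `p ≥ 2` variables) of a
weakly hierarchical log-linear model `θ` with `|C_θ^{(j)}| < m − 1` for all `j`, where
`m ≥ 2`, then the nonnegative PARAFAC rank of `π` is strictly less than `m^{p−1}`. -/
theorem parafacRank_lt_pow {p d m : ℕ} (hp : 2 ≤ p) (hm : 2 ≤ m)
    (θ : Finset (Fin p) → (Fin p → Fin d) → ℝ)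
    (hdep : ∀ (E : Finset (Fin p)) (i i' : Fin p → Fin d),
      (∀ j ∈ E, i j = i' j) → θ E i = θ E i')
    (hwh : ∀ (E F : Finset (Fin p)) (i i' : Fin p → Fin d),
      E ⊆ F → θ E i = 0 → (∀ j ∈ E, i' j = i j) → θ F i' = 0)
    (hC : ∀ j : Fin p, (interactingLevels θ j).ncard < m - 1) :
    parafacRank (d := fun _ => d) (loglinTensor (d := fun _ => d) θ) < m ^ (p - 1) := by
  obtain ⟨q, rfl⟩ : ∃ q, p = q + 2 := ⟨p - 2, by omega⟩
  obtain ⟨n, rfl⟩ : ∃ n, m = n + 2 := ⟨m - 2, by omega⟩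
  show _ < (n + 2) ^ (q + 1)
  rcases Nat.eq_zero_or_pos d with rfl | hd
  · have h0 : IsParafacDecomp (d := fun _ : Fin (q+2) => 0)
        (loglinTensor (d := fun _ : Fin (q+2) => 0) θ) 0 :=
      ⟨fun h => h.elim0, fun h => h.elim0, fun i => (i 0).elim0⟩
    have : parafacRank (d := fun _ : Fin (q+2) => 0)
        (loglinTensor (d := fun _ : Fin (q+2) => 0) θ) ≤ 0 := Nat.sInf_le h0
    have hpos : 0 < (n + 2) ^ (q + 1) := Nat.pow_pos (by omega)
    exact lt_of_le_of_lt this hpos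
  · obtain ⟨e, rfl⟩ : ∃ e, d = e + 1 := ⟨d - 1, by omega⟩
    have hdec := main_decomp (n := n) θ hdep hwh (fun j => by
      have := hC j
      omega)
    have h1 : parafacRank (d := fun _ : Fin (q+2) => e+1)
        (loglinTensor (d := fun _ : Fin (q+2) => e+1) θ) ≤ (n+1)^(q+1) :=
      Nat.sInf_le hdec
    have h2 : (n+1)^(q+1) < (n+2)^(q+1) := Nat.pow_lt_pow_left (by omega) (by omega)
    exact lt_of_le_of_lt h1 h2
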